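/- For every S ⊆ ℕ \ {0}, the Boolean frame 𝔄_S = (B, f_S) has no proper subalgebras: the only subset of B containing ∅ and closed under intersection, Boolean complement, and f_S is B itself. (In particular, b_n = f_S^{(n+1)}(ℕ) and a_n = ℕ \ b_n for every n ∈ ℕ.) -/

import Mathlib

universe u v

/-- A congruence of the Boolean frame `(α, f)`: an equivalence relation compatible
with the Boolean operations and with `f`. -/
structure IsCongr {α : Type u} [BooleanAlgebra α] (f : α → α) (Θ : α → α → Prop) : Prop where
  refl : ∀ x, Θ x x
  symm : ∀ {x y}, Θ x y → Θ y x
  trans : ∀ {x y z}, Θ x y → Θ y z → Θ x z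
  inf : ∀ {x y x' y'}, Θ x y → Θ x' y' → Θ (x ⊓ x') (y ⊓ y')
  compl : ∀ {x y}, Θ x y → Θ xᶜ yᶜ
  map : ∀ {x y}, Θ x y → Θ (f x) (f y)

/-- `B` is (the universe of) a subalgebra of the Boolean frame `(α, f)`:
it contains `⊥` and is closed under `⊓`, complement and `f`. -/
def IsSubalg {α : Type u} [BooleanAlgebra α] (f : α → α) (B : Set α) : Prop :=
  ⊥ ∈ B ∧ (∀ x ∈ B, ∀ y ∈ B, x ⊓ y ∈ B) ∧ (∀ x ∈ B, xᶜ ∈ B) ∧ (∀ x ∈ B, f x ∈ B)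

/-- A congruence of the Boolean frame whose universe is the subset `B` of `α`
(with the operations restricted from `(α, f)`), encoded as a relation on `α`
whose domain is contained in `B`. -/
structure IsCongrOn {α : Type u} [BooleanAlgebra α] (f : α → α) (B : Set α)
    (Θ : α → α → Prop) : Prop where
  dom : ∀ {x y}, Θ x y → x ∈ B ∧ y ∈ B
  refl : ∀ x ∈ B, Θ x x
  symm : ∀ {x y}, Θ x y → Θ y x
  trans : ∀ {x y z}, Θ x y → Θ y z → Θ x z
  inf : ∀ {x y x' y'}, Θ x y → Θ x' y' → Θ (x ⊓ x') (y ⊓ y')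
  compl : ∀ {x y}, Θ x y → Θ xᶜ yᶜ
  map : ∀ {x y}, Θ x y → Θ (f x) (f y)

/-- The Boolean frame `(α, f)` has the congruence extension property: every congruence
of every subalgebra is the restriction of a congruence of the whole frame. -/
def HasCEP {α : Type u} [BooleanAlgebra α] (f : α → α) : Prop :=
  ∀ B : Set α, IsSubalg f B → ∀ Θ : α → α → Prop, IsCongrOn f B Θ →
    ∃ Ψ : α → α → Prop, IsCongr f Ψ ∧ ∀ x y, Θ x y ↔ (Ψ x y ∧ x ∈ B ∧ y ∈ B)

/-- The Boolean algebra of finite and cofinite subsets of `ℕ`. -/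
def BFC : Set (Set ℕ) := {X : Set ℕ | X.Finite ∨ Xᶜ.Finite}

open Classical in
/-- The operation `f_S` (defined on all of the powerset of `ℕ`; the Boolean frame `𝔄_S`
is its restriction to the finite-cofinite algebra `BFC`, which is closed under `f_S`):
`f_S(ℕ) = b₀`, `f_S(bₙ) = bₙ₊₁`, `f_S(aₙ) = bₙ`, `f_S(uₙ) = ℕ \ uₙ` if `n ≥ 1` and `n ∈ S`,
`f_S(uₙ) = ℕ` if `n ≥ 1` and `n ∉ S`, `f_S(∅) = ∅`, and `f_S(x) = ℕ` otherwise,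
where `aₙ = {n}`, `bₙ = ℕ \ {n}`, `uₙ = {0, …, n}`. -/
noncomputable def fS (S : Set ℕ) (X : Set ℕ) : Set ℕ :=
  if X = Set.univ then ({0} : Set ℕ)ᶜ
  else if h : ∃ n : ℕ, X = ({n} : Set ℕ)ᶜ then ({h.choose + 1} : Set ℕ)ᶜ
  else if h : ∃ n : ℕ, X = ({n} : Set ℕ) then ({h.choose} : Set ℕ)ᶜ
  else if h : ∃ n : ℕ, 1 ≤ n ∧ X = {k : ℕ | k ≤ n} then
    (if h.choose ∈ S then ({k : ℕ | k ≤ h.choose} : Set ℕ)ᶜ else Set.univ)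
  else if X = ∅ then ∅
  else Set.univ

/-- for every `S ⊆ ℕ \ {0}`, the Boolean frame `𝔄_S = (BFC, f_S)` has no
proper subalgebras: the only subset of `BFC` containing `∅` and closed under
intersection, complement and `f_S` is `BFC` itself. (In particular,
`bₙ = f_S^{(n+1)}(ℕ)` and `aₙ = ℕ \ bₙ` for every `n`.) -/

lemma fS_univ (S : Set ℕ) : fS S Set.univ = ({0} : Set ℕ)ᶜ := by
  unfold fS; simp

lemma fS_compl_singleton (S : Set ℕ) (n : ℕ) :
    fS S (({n} : Set ℕ)ᶜ) = ({n + 1} : Set ℕ)ᶜ := by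
  have hne : (({n} : Set ℕ)ᶜ) ≠ Set.univ := by
    intro h
    have : (n : ℕ) ∈ ({n} : Set ℕ)ᶜ := h ▸ Set.mem_univ n
    simp at this
  have hex : ∃ m : ℕ, (({n} : Set ℕ)ᶜ) = ({m} : Set ℕ)ᶜ := ⟨n, rfl⟩
  have hch : hex.choose = n := by
    have := hex.choose_spec
    have h2 : ({hex.choose} : Set ℕ) = {n} := by
      have := congrArg compl this
      simpa using this.symm
    simpa using (Set.singleton_eq_singleton_iff.mp h2)
  unfold fS
  rw [if_neg hne, dif_pos hex, hch]

theorem stmt_4 (S : Set ℕ) (hS : 0 ∉ S) :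
    (∀ C : Set (Set ℕ), C ⊆ BFC → (∅ : Set ℕ) ∈ C →
      (∀ x ∈ C, ∀ y ∈ C, x ⊓ y ∈ C) → (∀ x ∈ C, xᶜ ∈ C) → (∀ x ∈ C, fS S x ∈ C) →
      C = BFC) ∧
    (∀ n : ℕ, (fS S)^[n + 1] Set.univ = ({n} : Set ℕ)ᶜ) ∧
    (∀ n : ℕ, ({n} : Set ℕ) = Set.univ \ ({n} : Set ℕ)ᶜ) := by
  have hb : ∀ n : ℕ, (fS S)^[n + 1] Set.univ = ({n} : Set ℕ)ᶜ := by
    intro n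
    induction n with
    | zero => simpa using fS_univ S
    | succ n ih => rw [Function.iterate_succ_apply', ih, fS_compl_singleton]
  refine ⟨?_, hb, fun n => by simp⟩
  intro C hsub h0 hinf hcompl hf
  refine Set.Subset.antisymm hsub ?_
  have huniv : (Set.univ : Set ℕ) ∈ C := by simpa using hcompl _ h0
  have hiter : ∀ k : ℕ, (fS S)^[k] Set.univ ∈ C := by
    intro k
    induction k with
    | zero => simpa using huniv
    | succ k ih => rw [Function.iterate_succ_apply']; exact hf _ ih
  have hbn : ∀ n : ℕ, (({n} : Set ℕ)ᶜ) ∈ C := fun n => hb n ▸ hiter (n + 1)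
  have han : ∀ n : ℕ, ({n} : Set ℕ) ∈ C := fun n => by
    simpa using hcompl _ (hbn n)
  have hunion : ∀ x ∈ C, ∀ y ∈ C, x ∪ y ∈ C := by
    intro x hx y hy
    have := hcompl _ (hinf _ (hcompl _ hx) _ (hcompl _ hy))
    simpa [Set.compl_inter, compl_compl] using this
  have hfin : ∀ x : Set ℕ, x.Finite → x ∈ C := by
    intro x hx
    refine Set.Finite.induction_on x hx h0 ?_
    intro a s _ _ hs
    have := hunion _ (han a) _ hs
    rw [Set.insert_eq]; exact this
  intro x hx
  rcases hx with h | h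
  · exact hfin x h
  · have := hcompl _ (hfin _ h)
    simpa using this
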